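/- Let σ² be the variance of a square-integrable function f on a product probability space, and let S̄₁,…,S̄_d denote the first-order upper Sobol' indices, S̄ᵢ = (1/(2σ²)) ∫ (f(v_i : z_{−i}) − f(z))² dF(z) dFᵢ(vᵢ). Then σ² ≤ σ² Σ_{i=1}^d S̄ᵢ, i.e., the sum of the upper Sobol' indices is at least 1. -/

import Mathlib

open MeasureTheory ProbabilityTheory Function Set

section aux

variable {α : Type*} {mα : MeasurableSpace α} {μ : Measure α}

/-- product of two L² functions is integrable -/
lemma mulL2 {g g' : α → ℝ} (hg : MemLp g 2 μ) (hg' : MemLp g' 2 μ) :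
    Integrable (fun x => g x * g' x) μ := by
  refine Integrable.mono' (hg.integrable_sq.add hg'.integrable_sq)
    (hg.aestronglyMeasurable.mul hg'.aestronglyMeasurable)
    (Filter.Eventually.of_forall fun x => ?_)
  have := sq_nonneg (g x - g' x)
  have := sq_nonneg (g x + g' x)
  rw [Real.norm_eq_abs, abs_le]
  constructor <;> simp only [Pi.add_apply] <;> nlinarith

/-- scalar Jensen: (∫ g)² ≤ ∫ g² over a probability measure -/
lemma sq_integral_le {g : α → ℝ} [IsProbabilityMeasure μ]
    (hgm : AEStronglyMeasurable g μ) (h2 : Integrable (fun x => g x ^ 2) μ) :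
    (∫ x, g x ∂μ) ^ 2 ≤ ∫ x, g x ^ 2 ∂μ := by
  have hmem : MemLp g 2 μ := (memLp_two_iff_integrable_sq hgm).2 h2
  have h := variance_nonneg g μ
  rw [variance_eq_sub hmem] at h
  have : (μ[g ^ 2] : ℝ) = ∫ x, g x ^ 2 ∂μ := by rfl
  rw [this] at h
  linarith

end aux

section sobol

variable {d : ℕ} (F : Fin d → Measure ℝ) [∀ i, IsProbabilityMeasure (F i)]

/-- blend of two vectors along a predicate -/
def sB (p : Fin d → Prop) [DecidablePred p] (z w : Fin d → ℝ) : Fin d → ℝ :=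
  fun j => if p j then z j else w j

lemma measurable_sB (p : Fin d → Prop) [DecidablePred p] :
    Measurable (fun zw : (Fin d → ℝ) × (Fin d → ℝ) => sB p zw.1 zw.2) := by
  apply measurable_pi_lambda
  intro j
  by_cases h : p j
  · simpa [sB, h, Function.comp_def] using (measurable_pi_apply j).comp measurable_fst
  · simpa [sB, h, Function.comp_def] using (measurable_pi_apply j).comp measurable_snd

lemma map_sB (p : Fin d → Prop) [DecidablePred p] :
    MeasurePreserving (fun zw : (Fin d → ℝ) × (Fin d → ℝ) => sB p zw.1 zw.2)
      ((Measure.pi F).prod (Measure.pi F)) (Measure.pi F) := by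
  refine ⟨measurable_sB p, ?_⟩
  refine (Measure.pi_eq fun s hs => ?_).symm
  have hpre : (fun zw : (Fin d → ℝ) × (Fin d → ℝ) => sB p zw.1 zw.2) ⁻¹' (univ.pi s)
      = (univ.pi fun j => if p j then s j else univ) ×ˢ
        (univ.pi fun j => if p j then univ else s j) := by
    ext zw
    simp only [mem_preimage, mem_pi, mem_univ, true_implies, mem_prod, sB]
    constructor
    · intro h
      constructor <;> intro j <;> by_cases hj : p j <;> simp [hj] <;> have := h j <;>
        simp [hj] at this <;> exact this
    · rintro ⟨h1, h2⟩ j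
      by_cases hj : p j
      · have := h1 j; simp [hj] at this ⊢; exact this
      · have := h2 j; simp [hj] at this ⊢; exact this
  rw [Measure.map_apply (measurable_sB p) (MeasurableSet.univ_pi hs), hpre,
    Measure.prod_prod, Measure.pi_pi, Measure.pi_pi, ← Finset.prod_mul_distrib]
  refine Finset.prod_congr rfl fun j _ => ?_
  by_cases hj : p j <;> simp [hj]

end sobol

section sobol2

variable {d : ℕ} (F : Fin d → Measure ℝ) [∀ i, IsProbabilityMeasure (F i)]

lemma memℒp_comp_sB (p : Fin d → Prop) [DecidablePred p] {g : (Fin d → ℝ) → ℝ} {r : ENNReal}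
    (hg : MemLp g r (Measure.pi F)) :
    MemLp (fun zw : (Fin d → ℝ) × (Fin d → ℝ) => g (sB p zw.1 zw.2)) r
      ((Measure.pi F).prod (Measure.pi F)) :=
  hg.comp_measurePreserving (map_sB F p)

lemma integral_comp_sB (p : Fin d → Prop) [DecidablePred p] {g : (Fin d → ℝ) → ℝ}
    (hg : AEStronglyMeasurable g (Measure.pi F)) :
    ∫ zw, g (sB p zw.1 zw.2) ∂((Measure.pi F).prod (Measure.pi F)) = ∫ z, g z ∂(Measure.pi F) := by
  conv_rhs => rw [← (map_sB F p).map_eq]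
  rw [← (map_sB F p).map_eq] at hg
  rw [integral_map (measurable_sB p).aemeasurable hg]

lemma memℒp_fst {g : (Fin d → ℝ) → ℝ} {r : ENNReal} (hg : MemLp g r (Measure.pi F)) :
    MemLp (fun zw : (Fin d → ℝ) × (Fin d → ℝ) => g zw.1) r
      ((Measure.pi F).prod (Measure.pi F)) :=
  hg.comp_measurePreserving ⟨measurable_fst, by simp⟩

lemma measurable_sB_right (p : Fin d → Prop) [DecidablePred p] (z : Fin d → ℝ) :
    Measurable (fun w => sB p z w) :=
  (measurable_sB p).comp (measurable_prodMk_left : Measurable fun w : Fin d → ℝ => (z, w))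

/-- conditional-expectation-like projection -/
noncomputable def sP (p : Fin d → Prop) [DecidablePred p] (ψ : (Fin d → ℝ) → ℝ) : (Fin d → ℝ) → ℝ :=
  fun z => ∫ w, ψ (sB p z w) ∂(Measure.pi F)

lemma stronglyMeasurable_sP (p : Fin d → Prop) [DecidablePred p] {ψ : (Fin d → ℝ) → ℝ}
    (hψ : Measurable ψ) : StronglyMeasurable (sP F p ψ) :=
  ((hψ.comp (measurable_sB p)).stronglyMeasurable).integral_prod_right'

lemma sP_inv {p p' : Fin d → Prop} [DecidablePred p] [DecidablePred p']
    (hpq : ∀ j, p j → p' j) (ψ : (Fin d → ℝ) → ℝ) (z w : Fin d → ℝ) :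
    sP F p ψ (sB p' z w) = sP F p ψ z := by
  unfold sP
  refine integral_congr_ae (Filter.Eventually.of_forall fun u => ?_)
  show ψ (sB p (sB p' z w) u) = ψ (sB p z u)
  congr 1
  funext j
  by_cases hj : p j
  · simp [sB, hj, hpq j hj]
  · simp [sB, hj]

end sobol2

section sobol3

variable {d : ℕ} (F : Fin d → Measure ℝ) [∀ i, IsProbabilityMeasure (F i)]

/-- key projection identity: for `ψ'` invariant along `p`,
`∫ ψ ψ' = ∫ (sP p ψ) ψ'`. -/
lemma K3 (p : Fin d → Prop) [DecidablePred p] {ψ ψ' : (Fin d → ℝ) → ℝ}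
    (hψm : Measurable ψ) (hψ2 : MemLp ψ 2 (Measure.pi F))
    (hψ'm : Measurable ψ') (hψ'2 : MemLp ψ' 2 (Measure.pi F))
    (hinv : ∀ z w, ψ' (sB p z w) = ψ' z) :
    ∫ z, ψ z * ψ' z ∂(Measure.pi F) = ∫ z, sP F p ψ z * ψ' z ∂(Measure.pi F) := by
  set π := Measure.pi F
  have hψB : MemLp (fun zw : (Fin d → ℝ) × (Fin d → ℝ) => ψ (sB p zw.1 zw.2)) 2 (π.prod π) :=
    memℒp_comp_sB F p hψ2
  have hψ'fst : MemLp (fun zw : (Fin d → ℝ) × (Fin d → ℝ) => ψ' zw.1) 2 (π.prod π) :=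
    memℒp_fst F hψ'2
  have hint : Integrable (fun zw : (Fin d → ℝ) × (Fin d → ℝ) =>
      ψ (sB p zw.1 zw.2) * ψ' zw.1) (π.prod π) := mulL2 hψB hψ'fst
  have h1 : ∫ z, ψ z * ψ' z ∂π
      = ∫ zw, ψ (sB p zw.1 zw.2) * ψ' (sB p zw.1 zw.2) ∂(π.prod π) :=
    (integral_comp_sB F p ((hψm.mul hψ'm).aestronglyMeasurable)).symm
  have h2 : ∫ zw, ψ (sB p zw.1 zw.2) * ψ' (sB p zw.1 zw.2) ∂(π.prod π)
      = ∫ zw, ψ (sB p zw.1 zw.2) * ψ' zw.1 ∂(π.prod π) := by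
    refine integral_congr_ae (Filter.Eventually.of_forall fun zw => ?_)
    dsimp only
    rw [hinv zw.1 zw.2]
  have h3 : ∫ zw, ψ (sB p zw.1 zw.2) * ψ' zw.1 ∂(π.prod π)
      = ∫ z, ∫ w, ψ (sB p z w) * ψ' z ∂π ∂π := (integral_integral (f := fun z w => ψ (sB p z w) * ψ' z) hint).symm
  have h4 : ∀ z, ∫ w, ψ (sB p z w) * ψ' z ∂π = sP F p ψ z * ψ' z := by
    intro z
    exact integral_mul_const (ψ' z) (fun w => ψ (sB p z w))
  rw [h1, h2, h3]
  exact integral_congr_ae (Filter.Eventually.of_forall h4)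

/-- Jensen: the projection stays in L² with smaller square integral. -/
lemma sP_L2 (p : Fin d → Prop) [DecidablePred p] {ψ : (Fin d → ℝ) → ℝ}
    (hψm : Measurable ψ) (hψ2 : MemLp ψ 2 (Measure.pi F)) :
    MemLp (sP F p ψ) 2 (Measure.pi F) ∧
      ∫ z, (sP F p ψ z) ^ 2 ∂(Measure.pi F) ≤ ∫ z, ψ z ^ 2 ∂(Measure.pi F) := by
  set π := Measure.pi F
  have hψB : MemLp (fun zw : (Fin d → ℝ) × (Fin d → ℝ) => ψ (sB p zw.1 zw.2)) 2 (π.prod π) :=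
    memℒp_comp_sB F p hψ2
  have hsq : Integrable (fun zw : (Fin d → ℝ) × (Fin d → ℝ) =>
      (ψ (sB p zw.1 zw.2)) ^ 2) (π.prod π) := hψB.integrable_sq
  have hDom : Integrable (fun z => ∫ w, (ψ (sB p z w)) ^ 2 ∂π) π :=
    hsq.integral_prod_left
  have hsm : StronglyMeasurable (sP F p ψ) := stronglyMeasurable_sP F p hψm
  have hae : ∀ᵐ z ∂π, (sP F p ψ z) ^ 2 ≤ ∫ w, (ψ (sB p z w)) ^ 2 ∂π := by
    filter_upwards [hsq.prod_right_ae] with z h2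
    exact sq_integral_le ((hψm.comp ((measurable_sB p).comp (measurable_prodMk_left : Measurable fun w : Fin d → ℝ => (z, w)))).aestronglyMeasurable) h2
  have hIntSq : Integrable (fun z => (sP F p ψ z) ^ 2) π := by
    refine Integrable.mono' hDom ((hsm.measurable.pow_const 2).aestronglyMeasurable) ?_
    filter_upwards [hae] with z hz
    rwa [Real.norm_eq_abs, abs_of_nonneg (sq_nonneg _)]
  refine ⟨(memLp_two_iff_integrable_sq hsm.aestronglyMeasurable).2 hIntSq, ?_⟩
  have step : ∫ z, (sP F p ψ z) ^ 2 ∂π ≤ ∫ z, ∫ w, (ψ (sB p z w)) ^ 2 ∂π ∂π :=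
    integral_mono_ae hIntSq hDom hae
  refine step.trans_eq ?_
  rw [integral_integral hsq]
  exact integral_comp_sB F p ((hψm.pow_const 2).aestronglyMeasurable)

end sobol3

section sobol4

variable {d : ℕ} (F : Fin d → Measure ℝ) [∀ i, IsProbabilityMeasure (F i)]

lemma map_eval (i : Fin d) :
    Measure.map (fun z : Fin d → ℝ => z i) (Measure.pi F) = F i := by
  refine Measure.ext fun s hs => ?_
  rw [Measure.map_apply (measurable_pi_apply i) hs]
  have hpre : (fun z : Fin d → ℝ => z i) ⁻¹' s
      = univ.pi (fun j => if j = i then s else univ) := by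
    ext z
    simp only [mem_preimage, mem_pi, mem_univ, true_implies]
    constructor
    · intro h j
      by_cases hj : j = i
      · subst hj; simpa using h
      · simp [hj]
    · intro h
      have := h i
      simpa using this
  rw [hpre, Measure.pi_pi]
  refine (Finset.prod_eq_single i (fun j _ hj => by simp [hj]) (by simp)).trans (by simp)

lemma map_update (i : Fin d) :
    MeasurePreserving (fun zv : (Fin d → ℝ) × ℝ => Function.update zv.1 i zv.2)
      ((Measure.pi F).prod (F i)) (Measure.pi F) := by
  refine ⟨measurable_update', ?_⟩
  refine (Measure.pi_eq fun s hs => ?_).symm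
  have hpre : (fun zv : (Fin d → ℝ) × ℝ => Function.update zv.1 i zv.2) ⁻¹' (univ.pi s)
      = (univ.pi fun j => if j = i then univ else s j) ×ˢ s i := by
    ext zv
    simp only [mem_preimage, mem_pi, mem_univ, true_implies, mem_prod, Function.update_apply]
    constructor
    · intro h
      refine ⟨fun j => ?_, by simpa using h i⟩
      by_cases hj : j = i
      · simp [hj]
      · simpa [hj] using h j
    · rintro ⟨h1, h2⟩ j
      by_cases hj : j = i
      · simpa [hj] using h2
      · have := h1 j; simpa [hj] using this
  rw [Measure.map_apply measurable_update' (MeasurableSet.univ_pi hs), hpre,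
    Measure.prod_prod, Measure.pi_pi]
  have h1 : ∏ j, F j (if j = i then univ else s j)
      = ∏ j ∈ Finset.univ.erase i, F j (s j) := by
    rw [← Finset.mul_prod_erase Finset.univ _ (Finset.mem_univ i)]
    rw [if_pos rfl, measure_univ, one_mul]
    exact Finset.prod_congr rfl fun j hj => by rw [if_neg (Finset.ne_of_mem_erase hj)]
  rw [h1, mul_comm]
  exact Finset.mul_prod_erase Finset.univ (fun j => F j (s j)) (Finset.mem_univ i)

end sobol4

section main

lemma integral_comp_mp {α β : Type*} [MeasurableSpace α] [MeasurableSpace β]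
    {μ : Measure α} {ν : Measure β} {φ : α → β} (h : MeasurePreserving φ μ ν)
    {g : β → ℝ} (hg : AEStronglyMeasurable g ν) :
    ∫ x, g (φ x) ∂μ = ∫ y, g y ∂ν := by
  conv_rhs => rw [← h.map_eq]
  rw [← h.map_eq] at hg
  rw [integral_map h.measurable.aemeasurable hg]

variable {d : ℕ} (F : Fin d → Measure ℝ) [∀ i, IsProbabilityMeasure (F i)]

theorem main_meas {f : (Fin d → ℝ) → ℝ} (hm : Measurable f) (hf2 : MemLp f 2 (Measure.pi F)) :
    ∫ z, (f z - ∫ w, f w ∂(Measure.pi F)) ^ 2 ∂(Measure.pi F)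
      ≤ ∑ i : Fin d, (1/2) *
        ∫ z, ∫ v, (f (Function.update z i v) - f z) ^ 2 ∂(F i) ∂(Measure.pi F) := by
  set π := Measure.pi F with hπ
  set c : ℝ := ∫ w, f w ∂π with hc
  set q : ℕ → Fin d → Prop := fun m j => (j : ℕ) < m with hq
  set H : ℕ → (Fin d → ℝ) → ℝ := fun m => sP F (q m) f with hH
  set G : Fin d → (Fin d → ℝ) → ℝ := fun i => sP F (fun j => j ≠ i) f with hG
  have hHm : ∀ m, Measurable (H m) := fun m => (stronglyMeasurable_sP F (q m) hm).measurable
  have hH2 : ∀ m, MemLp (H m) 2 π := fun m => (sP_L2 F (q m) hm hf2).1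
  have hGm : ∀ i, Measurable (G i) := fun i => (stronglyMeasurable_sP F _ hm).measurable
  have hG2 : ∀ i, MemLp (G i) 2 π := fun i => (sP_L2 F _ hm hf2).1
  -- cross terms
  have hfH : ∀ m m', m ≤ m' → ∫ z, f z * H m z ∂π = ∫ z, H m' z * H m z ∂π := by
    intro m m' hmm'
    exact K3 F (q m') hm hf2 (hHm m) (hH2 m)
      (fun z w => sP_inv F (fun j hj => lt_of_lt_of_le hj hmm') f z w)
  have hsqmul : ∀ g : (Fin d → ℝ) → ℝ, ∫ z, g z * g z ∂π = ∫ z, g z ^ 2 ∂π := by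
    intro g
    exact integral_congr_ae (Filter.Eventually.of_forall fun z => (pow_two (g z)).symm)
  have hcross : ∀ m m', m ≤ m' →
      ∫ z, H m' z * H m z ∂π = ∫ z, H m z ^ 2 ∂π := by
    intro m m' hmm'
    rw [← hfH m m' hmm', hfH m m le_rfl, hsqmul]
  -- telescoping
  have hts : ∀ k : ℕ, ∫ z, (H (k+1) z - H k z) ^ 2 ∂π
      = (∫ z, H (k+1) z ^ 2 ∂π) - ∫ z, H k z ^ 2 ∂π := by
    intro k
    have i1 : Integrable (fun z => H (k+1) z ^ 2) π := (hH2 (k+1)).integrable_sq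
    have i2 : Integrable (fun z => 2 * (H (k+1) z * H k z)) π :=
      (mulL2 (hH2 (k+1)) (hH2 k)).const_mul 2
    have i3 : Integrable (fun z => H k z ^ 2) π := (hH2 k).integrable_sq
    have i12 : Integrable (fun z => H (k+1) z ^ 2 - 2 * (H (k+1) z * H k z)) π := i1.sub i2
    calc ∫ z, (H (k+1) z - H k z) ^ 2 ∂π
        = ∫ z, ((H (k+1) z ^ 2 - 2 * (H (k+1) z * H k z)) + H k z ^ 2) ∂π := by
          refine integral_congr_ae (Filter.Eventually.of_forall fun z => ?_)
          show (H (k+1) z - H k z) ^ 2 = _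
          ring
      _ = (∫ z, (H (k+1) z ^ 2 - 2 * (H (k+1) z * H k z)) ∂π) + ∫ z, H k z ^ 2 ∂π :=
          integral_add i12 i3
      _ = ((∫ z, H (k+1) z ^ 2 ∂π) - ∫ z, 2 * (H (k+1) z * H k z) ∂π) + ∫ z, H k z ^ 2 ∂π := by
          rw [integral_sub i1 i2]
      _ = ((∫ z, H (k+1) z ^ 2 ∂π) - 2 * ∫ z, H (k+1) z * H k z ∂π) + ∫ z, H k z ^ 2 ∂π := by
          rw [integral_const_mul]
      _ = _ := by rw [hcross k (k+1) (Nat.le_succ k)]; ring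
  have hAd : ∫ z, H d z ^ 2 ∂π = ∫ z, f z ^ 2 ∂π := by
    have hHd : ∀ z, H d z = f z := by
      intro z
      have hz : ∀ w, sB (q d) z w = z := fun w => funext fun j => if_pos j.isLt
      show ∫ w, f (sB (q d) z w) ∂π = f z
      simp only [hz]
      simp
    exact integral_congr_ae (Filter.Eventually.of_forall fun z => by
      show H d z ^ 2 = f z ^ 2; rw [hHd z])
  have hA0 : ∫ z, H 0 z ^ 2 ∂π = c ^ 2 := by
    have hH0 : ∀ z, H 0 z = c := by
      intro z
      have hz : ∀ w, sB (q 0) z w = w := fun w => funext fun j => if_neg (Nat.not_lt_zero _)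
      show ∫ w, f (sB (q 0) z w) ∂π = c
      simp only [hz, hc]
    rw [integral_congr_ae (Filter.Eventually.of_forall fun z => by
      show H 0 z ^ 2 = c ^ 2; rw [hH0 z])]
    simp
  -- σ² = If2 - c²
  have hσ : ∫ z, (f z - c) ^ 2 ∂π = (∫ z, f z ^ 2 ∂π) - c ^ 2 := by
    have i1 : Integrable (fun z => f z ^ 2) π := hf2.integrable_sq
    have i2 : Integrable (fun z => 2 * (f z * c)) π :=
      ((hf2.integrable one_le_two).mul_const c).const_mul 2
    have i12 : Integrable (fun z => f z ^ 2 - 2 * (f z * c)) π := i1.sub i2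
    calc ∫ z, (f z - c) ^ 2 ∂π
        = ∫ z, ((f z ^ 2 - 2 * (f z * c)) + c ^ 2) ∂π := by
          refine integral_congr_ae (Filter.Eventually.of_forall fun z => ?_)
          show (f z - c) ^ 2 = _
          ring
      _ = (∫ z, (f z ^ 2 - 2 * (f z * c)) ∂π) + ∫ z, (c:ℝ) ^ 2 ∂π :=
          integral_add i12 (integrable_const _)
      _ = ((∫ z, f z ^ 2 ∂π) - ∫ z, 2 * (f z * c) ∂π) + c ^ 2 := by
          rw [integral_sub i1 i2, integral_const]; simp
      _ = ((∫ z, f z ^ 2 ∂π) - 2 * ((∫ z, f z ∂π) * c)) + c ^ 2 := by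
          rw [integral_const_mul, integral_mul_const]
      _ = _ := by rw [← hc]; ring
  -- ∫ f·G i = ∫ (G i)²
  have hfG : ∀ i, ∫ z, f z * G i z ∂π = ∫ z, G i z ^ 2 ∂π := by
    intro i
    rw [K3 F (fun j => j ≠ i) hm hf2 (hGm i) (hG2 i)
      (fun z w => sP_inv F (fun j hj => hj) f z w), hsqmul]
  -- expansion of ∫ (f - G i)²
  have hfGexp : ∀ i, ∫ z, (f z - G i z) ^ 2 ∂π
      = (∫ z, f z ^ 2 ∂π) - ∫ z, G i z ^ 2 ∂π := by
    intro i
    have i1 : Integrable (fun z => f z ^ 2) π := hf2.integrable_sq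
    have i2 : Integrable (fun z => 2 * (f z * G i z)) π := (mulL2 hf2 (hG2 i)).const_mul 2
    have i3 : Integrable (fun z => G i z ^ 2) π := (hG2 i).integrable_sq
    have i12 : Integrable (fun z => f z ^ 2 - 2 * (f z * G i z)) π := i1.sub i2
    calc ∫ z, (f z - G i z) ^ 2 ∂π
        = ∫ z, ((f z ^ 2 - 2 * (f z * G i z)) + G i z ^ 2) ∂π := by
          refine integral_congr_ae (Filter.Eventually.of_forall fun z => ?_)
          show (f z - G i z) ^ 2 = _
          ring
      _ = (∫ z, (f z ^ 2 - 2 * (f z * G i z)) ∂π) + ∫ z, G i z ^ 2 ∂π := integral_add i12 i3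
      _ = ((∫ z, f z ^ 2 ∂π) - ∫ z, 2 * (f z * G i z) ∂π) + ∫ z, G i z ^ 2 ∂π := by
          rw [integral_sub i1 i2]
      _ = ((∫ z, f z ^ 2 ∂π) - 2 * ∫ z, f z * G i z ∂π) + ∫ z, G i z ^ 2 ∂π := by
          rw [integral_const_mul]
      _ = _ := by rw [hfG i]; ring
  -- tower property (a.e.)
  have htower : ∀ k : Fin d, (fun z => H ((k:ℕ)+1) z - H (k:ℕ) z)
      =ᵐ[π] sP F (q ((k:ℕ)+1)) (fun x => f x - G k x) := by
    intro k
    have hint1 : Integrable (fun zw : (Fin d → ℝ) × (Fin d → ℝ) =>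
        f (sB (q ((k:ℕ)+1)) zw.1 zw.2)) (π.prod π) :=
      (memℒp_comp_sB F _ hf2).integrable one_le_two
    have hint2 : Integrable (fun zw : (Fin d → ℝ) × (Fin d → ℝ) =>
        G k (sB (q ((k:ℕ)+1)) zw.1 zw.2)) (π.prod π) :=
      (memℒp_comp_sB F _ (hG2 k)).integrable one_le_two
    have hintk : Integrable (fun zw : (Fin d → ℝ) × (Fin d → ℝ) =>
        f (sB (q (k:ℕ)) zw.1 zw.2)) (π.prod π) :=
      (memℒp_comp_sB F _ hf2).integrable one_le_two
    have hswap : MeasurePreserving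
        (fun wu : (Fin d → ℝ) × (Fin d → ℝ) => sB (fun j => j = k) wu.2 wu.1)
        (π.prod π) π :=
      (map_sB F (fun j => j = k)).comp Measure.measurePreserving_swap
    filter_upwards [hint1.prod_right_ae, hint2.prod_right_ae, hintk.prod_right_ae]
      with z hz1 hz2 hzk
    have key : ∀ w u : Fin d → ℝ,
        sB (fun j => j ≠ k) (sB (q ((k:ℕ)+1)) z w) u
          = sB (q (k:ℕ)) z (sB (fun j => j = k) u w) := by
      intro w u; funext j
      by_cases hk : j = k
      · subst hk
        simp [sB, hq, lt_irrefl]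
      · have hv : (j:ℕ) ≠ (k:ℕ) := fun h => hk (Fin.ext h)
        by_cases hlt : (j:ℕ) < (k:ℕ)
        · simp [sB, hk, hq, hlt, Nat.lt_succ_of_lt hlt]
        · have h1 : ¬ (j:ℕ) < (k:ℕ)+1 := by omega
          simp [sB, hk, hq, hlt, h1]
    have hsecm : AEStronglyMeasurable (fun v => f (sB (q (k:ℕ)) z v)) π :=
      (hm.comp (measurable_sB_right (q (k:ℕ)) z)).aestronglyMeasurable
    have htow : ∫ w, G k (sB (q ((k:ℕ)+1)) z w) ∂π = H (k:ℕ) z := by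
      calc ∫ w, G k (sB (q ((k:ℕ)+1)) z w) ∂π
          = ∫ w, ∫ u, f (sB (q (k:ℕ)) z (sB (fun j => j = k) u w)) ∂π ∂π := by
            refine integral_congr_ae (Filter.Eventually.of_forall fun w => ?_)
            show ∫ u, f (sB (fun j => j ≠ k) (sB (q ((k:ℕ)+1)) z w) u) ∂π = _
            refine integral_congr_ae (Filter.Eventually.of_forall fun u => ?_)
            show f (sB (fun j => j ≠ k) (sB (q ((k:ℕ)+1)) z w) u) = _
            rw [key w u]
        _ = ∫ wu : (Fin d → ℝ) × (Fin d → ℝ),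
              f (sB (q (k:ℕ)) z (sB (fun j => j = k) wu.2 wu.1)) ∂(π.prod π) := by
            refine integral_integral
              (f := fun w u => f (sB (q (k:ℕ)) z (sB (fun j => j = k) u w))) ?_
            exact (hswap.integrable_comp hsecm).2 hzk
        _ = ∫ v, f (sB (q (k:ℕ)) z v) ∂π := integral_comp_mp hswap hsecm
        _ = H (k:ℕ) z := rfl
    show H ((k:ℕ)+1) z - H (k:ℕ) z = _
    have hsub : sP F (q ((k:ℕ)+1)) (fun x => f x - G k x) z
        = (∫ w, f (sB (q ((k:ℕ)+1)) z w) ∂π) - ∫ w, G k (sB (q ((k:ℕ)+1)) z w) ∂π :=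
      integral_sub hz1 hz2
    rw [hsub, htow]
    rfl
  -- Jensen per coordinate
  have hJ : ∀ k : Fin d, ∫ z, (H ((k:ℕ)+1) z - H (k:ℕ) z) ^ 2 ∂π
      ≤ (∫ z, f z ^ 2 ∂π) - ∫ z, G k z ^ 2 ∂π := by
    intro k
    have hDm : Measurable (fun x => f x - G k x) := hm.sub (hGm k)
    have hD2 : MemLp (fun x => f x - G k x) 2 π := hf2.sub (hG2 k)
    have h1 : ∫ z, (H ((k:ℕ)+1) z - H (k:ℕ) z) ^ 2 ∂π
        = ∫ z, (sP F (q ((k:ℕ)+1)) (fun x => f x - G k x) z) ^ 2 ∂π := by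
      refine integral_congr_ae ((htower k).mono fun z hz => ?_)
      show (H ((k:ℕ)+1) z - H (k:ℕ) z) ^ 2 = _
      have hz' : H ((k:ℕ)+1) z - H (k:ℕ) z
          = sP F (q ((k:ℕ)+1)) (fun x => f x - G k x) z := hz
      rw [hz']
    rw [h1, ← hfGexp k]
    exact (sP_L2 F (q ((k:ℕ)+1)) hDm hD2).2
  -- Sobol' numerator
  have mpfst : MeasurePreserving (Prod.fst : (Fin d → ℝ) × (Fin d → ℝ) → (Fin d → ℝ))
      (π.prod π) π := ⟨measurable_fst, by simp⟩
  have hT : ∀ i : Fin d, ∫ z, ∫ v, (f (Function.update z i v) - f z) ^ 2 ∂(F i) ∂π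
      = 2 * ((∫ z, f z ^ 2 ∂π) - ∫ z, G i z ^ 2 ∂π) := by
    intro i
    have hup : ∀ z w : Fin d → ℝ, Function.update z i (w i) = sB (fun j => j ≠ i) z w := by
      intro z w; funext j
      by_cases hj : j = i
      · subst hj; simp [sB, Function.update_apply]
      · simp [sB, Function.update_apply, hj]
    have step1 : ∀ z, ∫ v, (f (Function.update z i v) - f z) ^ 2 ∂(F i)
        = ∫ w, (f (sB (fun j => j ≠ i) z w) - f z) ^ 2 ∂π := by
      intro z
      have hmeas : AEStronglyMeasurable (fun v : ℝ => (f (Function.update z i v) - f z) ^ 2)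
          (F i) :=
        (((hm.comp (measurable_update z)).sub measurable_const).pow_const 2).aestronglyMeasurable
      rw [← map_eval F i] at hmeas ⊢
      rw [integral_map (measurable_pi_apply i).aemeasurable hmeas]
      refine integral_congr_ae (Filter.Eventually.of_forall fun w => ?_)
      show (f (Function.update z i (w i)) - f z) ^ 2 = _
      rw [hup z w]
    have hmemB : MemLp (fun zw : (Fin d → ℝ) × (Fin d → ℝ) =>
        f (sB (fun j => j ≠ i) zw.1 zw.2)) 2 (π.prod π) := memℒp_comp_sB F _ hf2
    have hmemfst : MemLp (fun zw : (Fin d → ℝ) × (Fin d → ℝ) => f zw.1) 2 (π.prod π) :=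
      memℒp_fst F hf2
    have hintsq : Integrable (fun zw : (Fin d → ℝ) × (Fin d → ℝ) =>
        (f (sB (fun j => j ≠ i) zw.1 zw.2) - f zw.1) ^ 2) (π.prod π) :=
      (hmemB.sub hmemfst).integrable_sq
    have ia : Integrable (fun zw : (Fin d → ℝ) × (Fin d → ℝ) =>
        (f (sB (fun j => j ≠ i) zw.1 zw.2)) ^ 2) (π.prod π) := hmemB.integrable_sq
    have ib : Integrable (fun zw : (Fin d → ℝ) × (Fin d → ℝ) => (f zw.1) ^ 2) (π.prod π) :=
      hmemfst.integrable_sq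
    have iab : Integrable (fun zw : (Fin d → ℝ) × (Fin d → ℝ) =>
        2 * (f (sB (fun j => j ≠ i) zw.1 zw.2) * f zw.1)) (π.prod π) :=
      (mulL2 hmemB hmemfst).const_mul 2
    have iaab : Integrable (fun zw : (Fin d → ℝ) × (Fin d → ℝ) =>
        (f (sB (fun j => j ≠ i) zw.1 zw.2)) ^ 2
          - 2 * (f (sB (fun j => j ≠ i) zw.1 zw.2) * f zw.1)) (π.prod π) := ia.sub iab
    have ea : ∫ zw : (Fin d → ℝ) × (Fin d → ℝ), (f (sB (fun j => j ≠ i) zw.1 zw.2)) ^ 2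
        ∂(π.prod π) = ∫ z, f z ^ 2 ∂π :=
      integral_comp_sB F _ ((hm.pow_const 2).aestronglyMeasurable)
    have eb : ∫ zw : (Fin d → ℝ) × (Fin d → ℝ), (f zw.1) ^ 2 ∂(π.prod π)
        = ∫ z, f z ^ 2 ∂π :=
      integral_comp_mp mpfst ((hm.pow_const 2).aestronglyMeasurable)
    have eab : ∫ zw : (Fin d → ℝ) × (Fin d → ℝ), f (sB (fun j => j ≠ i) zw.1 zw.2) * f zw.1
        ∂(π.prod π) = ∫ z, G i z ^ 2 ∂π := by
      calc ∫ zw : (Fin d → ℝ) × (Fin d → ℝ), f (sB (fun j => j ≠ i) zw.1 zw.2) * f zw.1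
            ∂(π.prod π)
          = ∫ z, ∫ w, f (sB (fun j => j ≠ i) z w) * f z ∂π ∂π :=
            (integral_integral (f := fun z w => f (sB (fun j => j ≠ i) z w) * f z)
              (mulL2 hmemB hmemfst)).symm
        _ = ∫ z, f z * G i z ∂π := by
            refine integral_congr_ae (Filter.Eventually.of_forall fun z => ?_)
            show ∫ w, f (sB (fun j => j ≠ i) z w) * f z ∂π = f z * G i z
            rw [integral_mul_const]
            exact mul_comm _ _
        _ = ∫ z, G i z ^ 2 ∂π := hfG i
    calc ∫ z, ∫ v, (f (Function.update z i v) - f z) ^ 2 ∂(F i) ∂π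
        = ∫ z, ∫ w, (f (sB (fun j => j ≠ i) z w) - f z) ^ 2 ∂π ∂π :=
          integral_congr_ae (Filter.Eventually.of_forall fun z => step1 z)
      _ = ∫ zw : (Fin d → ℝ) × (Fin d → ℝ),
            (f (sB (fun j => j ≠ i) zw.1 zw.2) - f zw.1) ^ 2 ∂(π.prod π) :=
          integral_integral (f := fun z w => (f (sB (fun j => j ≠ i) z w) - f z) ^ 2) hintsq
      _ = ∫ zw : (Fin d → ℝ) × (Fin d → ℝ),
            ((f (sB (fun j => j ≠ i) zw.1 zw.2)) ^ 2
              - 2 * (f (sB (fun j => j ≠ i) zw.1 zw.2) * f zw.1) + (f zw.1) ^ 2) ∂(π.prod π) := by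
          refine integral_congr_ae (Filter.Eventually.of_forall fun zw => ?_)
          show (f (sB (fun j => j ≠ i) zw.1 zw.2) - f zw.1) ^ 2 = _
          ring
      _ = (∫ zw : (Fin d → ℝ) × (Fin d → ℝ), ((f (sB (fun j => j ≠ i) zw.1 zw.2)) ^ 2
              - 2 * (f (sB (fun j => j ≠ i) zw.1 zw.2) * f zw.1)) ∂(π.prod π))
            + ∫ zw : (Fin d → ℝ) × (Fin d → ℝ), (f zw.1) ^ 2 ∂(π.prod π) :=
          integral_add iaab ib
      _ = ((∫ zw : (Fin d → ℝ) × (Fin d → ℝ), (f (sB (fun j => j ≠ i) zw.1 zw.2)) ^ 2 ∂(π.prod π))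
            - ∫ zw : (Fin d → ℝ) × (Fin d → ℝ),
                2 * (f (sB (fun j => j ≠ i) zw.1 zw.2) * f zw.1) ∂(π.prod π))
            + ∫ zw : (Fin d → ℝ) × (Fin d → ℝ), (f zw.1) ^ 2 ∂(π.prod π) := by
          rw [integral_sub ia iab]
      _ = ((∫ z, f z ^ 2 ∂π) - 2 * ∫ z, G i z ^ 2 ∂π) + ∫ z, f z ^ 2 ∂π := by
          rw [integral_const_mul, ea, eb, eab]
      _ = 2 * ((∫ z, f z ^ 2 ∂π) - ∫ z, G i z ^ 2 ∂π) := by ring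
  -- final assembly
  have sum1 : ∫ z, (f z - c) ^ 2 ∂π
      = ∑ k : Fin d, ∫ z, (H ((k:ℕ)+1) z - H (k:ℕ) z) ^ 2 ∂π := by
    rw [hσ]
    have e1 : ∑ k : Fin d, ∫ z, (H ((k:ℕ)+1) z - H (k:ℕ) z) ^ 2 ∂π
        = ∑ k : Fin d, ((fun m => ∫ z, H m z ^ 2 ∂π) ((k:ℕ)+1)
            - (fun m => ∫ z, H m z ^ 2 ∂π) (k:ℕ)) :=
      Finset.sum_congr rfl fun k _ => hts (k:ℕ)
    rw [e1, Fin.sum_univ_eq_sum_range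
      (fun m => (fun m => ∫ z, H m z ^ 2 ∂π) (m+1) - (fun m => ∫ z, H m z ^ 2 ∂π) m) d,
      Finset.sum_range_sub (fun m => ∫ z, H m z ^ 2 ∂π)]
    rw [hAd, hA0]
  calc ∫ z, (f z - c) ^ 2 ∂π
      = ∑ k : Fin d, ∫ z, (H ((k:ℕ)+1) z - H (k:ℕ) z) ^ 2 ∂π := sum1
    _ ≤ ∑ k : Fin d, ((∫ z, f z ^ 2 ∂π) - ∫ z, G k z ^ 2 ∂π) :=
        Finset.sum_le_sum fun k _ => hJ k
    _ = ∑ i : Fin d, (1/2) *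
          ∫ z, ∫ v, (f (Function.update z i v) - f z) ^ 2 ∂(F i) ∂π :=
        Finset.sum_congr rfl fun i _ => by rw [hT i]; ring

end main

/-- Let `σ²` be the variance of a square-integrable function `f` on a product probability space,
and let `S̄ᵢ = (1/(2σ²)) ∫∫ (f(vᵢ:z₋ᵢ) − f(z))² dF(z) dFᵢ(vᵢ)` be the first-order upper Sobol'
indices.  Then `σ² ≤ σ² ∑ᵢ S̄ᵢ`, i.e. the sum of the upper Sobol' indices is at least `1`. -/
theorem stmt7 {d : ℕ} (F : Fin d → Measure ℝ) [∀ i, IsProbabilityMeasure (F i)]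
    (f : (Fin d → ℝ) → ℝ) (hf : MemLp f 2 (Measure.pi F))
    (σ2 : ℝ)
    (hσ2 : σ2 = ∫ z, (f z - ∫ w, f w ∂(Measure.pi F)) ^ 2 ∂(Measure.pi F))
    (hσpos : 0 < σ2)
    (Sbar : Fin d → ℝ)
    (hSbar : ∀ i, Sbar i = (1 / (2 * σ2)) *
      ∫ z, ∫ v, (f (Function.update z i v) - f z) ^ 2 ∂(F i) ∂(Measure.pi F)) :
    σ2 ≤ σ2 * ∑ i, Sbar i ∧ 1 ≤ ∑ i, Sbar i := by
  set π := Measure.pi F with hπ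
  obtain ⟨f', hf'sm, hff'⟩ : ∃ f', StronglyMeasurable f' ∧ f =ᵐ[π] f' :=
    ⟨hf.1.mk f, hf.1.stronglyMeasurable_mk, hf.1.ae_eq_mk⟩
  have hf'm : Measurable f' := hf'sm.measurable
  have hf'2 : MemLp f' 2 π := hf.ae_eq hff'
  have hcc : ∫ w, f w ∂π = ∫ w, f' w ∂π := integral_congr_ae hff'
  have hσ2' : σ2 = ∫ z, (f' z - ∫ w, f' w ∂π) ^ 2 ∂π := by
    rw [hσ2, ← hcc]
    refine integral_congr_ae (hff'.mono fun z hz => ?_)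
    show (f z - ∫ w, f w ∂π) ^ 2 = (f' z - ∫ w, f w ∂π) ^ 2
    rw [hz]
  have hSb' : ∀ i : Fin d,
      ∫ z, ∫ v, (f (Function.update z i v) - f z) ^ 2 ∂(F i) ∂π
        = ∫ z, ∫ v, (f' (Function.update z i v) - f' z) ^ 2 ∂(F i) ∂π := by
    intro i
    have hmp := map_update F i
    have hae : ∀ᵐ zv ∂(π.prod (F i)),
        f (Function.update zv.1 i zv.2) = f' (Function.update zv.1 i zv.2) := by
      have hff'' : f =ᵐ[Measure.map (fun zv : (Fin d → ℝ) × ℝ => Function.update zv.1 i zv.2)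
          (π.prod (F i))] f' := by rwa [hmp.map_eq]
      exact ae_eq_comp hmp.measurable.aemeasurable hff''
    have hae2 := Measure.ae_ae_of_ae_prod hae
    refine integral_congr_ae ?_
    filter_upwards [hae2, hff'] with z hz hfz
    refine integral_congr_ae ?_
    filter_upwards [hz] with v hv
    show (f (Function.update z i v) - f z) ^ 2 = (f' (Function.update z i v) - f' z) ^ 2
    rw [hv, hfz]
  have key := main_meas F hf'm hf'2
  have hle : σ2 ≤ ∑ i : Fin d, (1/2) *
      ∫ z, ∫ v, (f (Function.update z i v) - f z) ^ 2 ∂(F i) ∂π := by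
    rw [hσ2']
    refine key.trans_eq ?_
    exact Finset.sum_congr rfl fun i _ => by rw [hSb' i]
  have hsum : σ2 * ∑ i, Sbar i = ∑ i : Fin d, (1/2) *
      ∫ z, ∫ v, (f (Function.update z i v) - f z) ^ 2 ∂(F i) ∂π := by
    rw [Finset.mul_sum]
    refine Finset.sum_congr rfl fun i _ => ?_
    rw [hSbar i]
    field_simp
  have h1 : σ2 ≤ σ2 * ∑ i, Sbar i := by rw [hsum]; exact hle
  refine ⟨h1, ?_⟩
  have h2 : σ2 * 1 ≤ σ2 * ∑ i, Sbar i := by rw [mul_one]; exact h1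
  exact le_of_mul_le_mul_left h2 hσpos
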